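/- Let {lᵏ} ⊂ L²(Q,ℝⁿ) converge weakly to 0 in L² and set zᵏ(x,y) = ∫₀ˣ∫₀ʸ lᵏ(s,t) ds dt. Then sup_{(x,y)∈Q} |zᵏ(x,y)| → 0 as k → ∞. -/

import Mathlib

open MeasureTheory Set Real
open scoped ENNReal NNReal

/-- The unit square `Q = [0,1] × [0,1]`. -/
def Q : Set (ℝ × ℝ) := Icc (0:ℝ) 1 ×ˢ Icc (0:ℝ) 1

lemma measurableSet_Q : MeasurableSet Q := (measurableSet_Icc).prod measurableSet_Icc

lemma volume_Q : volume Q = 1 := by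
  rw [Q, show (volume : Measure (ℝ × ℝ)) = (volume : Measure ℝ).prod volume from rfl,
    Measure.prod_prod, Real.volume_Icc]
  norm_num

instance : IsFiniteMeasure (volume.restrict Q) := by
  constructor
  rw [Measure.restrict_apply_univ, volume_Q]
  exact ENNReal.one_lt_top

lemma cs_bound {E : Type*} [NormedAddCommGroup E] [NormedSpace ℝ E] {f : ℝ × ℝ → E}
    (hf : MemLp f 2 (volume.restrict Q)) {S : Set (ℝ × ℝ)} (hS : MeasurableSet S)
    (hSQ : S ⊆ Q) :
    ‖∫ p in S, f p‖ ≤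
      (eLpNorm f 2 (volume.restrict Q)).toReal * ((volume S).toReal) ^ (1/2 : ℝ) := by
  have hfm : AEStronglyMeasurable f (volume.restrict S) :=
    hf.aestronglyMeasurable.mono_measure (Measure.restrict_mono hSQ le_rfl)
  have h1 : ‖∫ p in S, f p‖ ≤ ∫ p in S, ‖f p‖ := norm_integral_le_integral_norm _
  have h2 : ∫ p in S, ‖f p‖ ≤ ((∫⁻ p in S, (‖f p‖₊ : ℝ≥0∞)).toReal) := by
    exact le_of_eq (integral_norm_eq_lintegral_enorm hfm)
  have h3 : (∫⁻ p in S, (‖f p‖₊ : ℝ≥0∞)) ≤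
      (∫⁻ p in S, (‖f p‖₊ : ℝ≥0∞) ^ (2:ℝ)) ^ (1/2:ℝ) * (volume S) ^ (1/2:ℝ) := by
    have := ENNReal.lintegral_mul_le_Lp_mul_Lq (volume.restrict S)
      (show (2:ℝ).HolderConjugate 2 from ⟨by norm_num, by norm_num, by norm_num⟩)
      (f := fun p => (‖f p‖₊ : ℝ≥0∞)) (g := fun _ => 1)
      hfm.enorm (aemeasurable_const)
    simpa [Measure.restrict_apply_univ] using this
  have h4 : (∫⁻ p in S, (‖f p‖₊ : ℝ≥0∞) ^ (2:ℝ)) ^ (1/2:ℝ) ≤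
      eLpNorm f 2 (volume.restrict Q) := by
    rw [eLpNorm_eq_lintegral_rpow_enorm_toReal (by norm_num) (by norm_num)]
    norm_num
    gcongr
    exact le_rfl
  have hfin : eLpNorm f 2 (volume.restrict Q) ≠ ⊤ := hf.eLpNorm_ne_top
  have h5 : (∫⁻ p in S, (‖f p‖₊ : ℝ≥0∞)).toReal ≤
      (eLpNorm f 2 (volume.restrict Q)).toReal * ((volume S).toReal) ^ (1/2 : ℝ) := by
    have hvol : volume S ≠ ⊤ := by
      refine ne_of_lt (lt_of_le_of_lt (measure_mono hSQ) ?_)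
      rw [volume_Q]; exact ENNReal.one_lt_top
    calc (∫⁻ p in S, (‖f p‖₊ : ℝ≥0∞)).toReal
        ≤ ((eLpNorm f 2 (volume.restrict Q)) * (volume S) ^ (1/2:ℝ)).toReal := by
          apply ENNReal.toReal_mono
          · exact ENNReal.mul_ne_top hfin (by simp [ENNReal.rpow_eq_top_iff, hvol])
          · exact h3.trans (by gcongr)
      _ = (eLpNorm f 2 (volume.restrict Q)).toReal * ((volume S).toReal) ^ (1/2 : ℝ) := by
          rw [ENNReal.toReal_mul, ENNReal.toReal_rpow]
  linarith [h2.trans h5]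

lemma rect_subset_Q {x y : ℝ} (hx : x ∈ Icc (0:ℝ) 1) (hy : y ∈ Icc (0:ℝ) 1) :
    Ioc (0:ℝ) x ×ˢ Ioc (0:ℝ) y ⊆ Q := by
  intro p hp
  obtain ⟨h1, h2⟩ := hp
  exact ⟨⟨h1.1.le, h1.2.trans hx.2⟩, ⟨h2.1.le, h2.2.trans hy.2⟩⟩

lemma rep {E : Type*} [NormedAddCommGroup E] [NormedSpace ℝ E] {f : ℝ × ℝ → E}
    (hf : IntegrableOn f Q) {x y : ℝ} (hx : x ∈ Icc (0:ℝ) 1) (hy : y ∈ Icc (0:ℝ) 1) :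
    (∫ s in (0:ℝ)..x, ∫ t in (0:ℝ)..y, f (s, t)) =
      ∫ p in Ioc (0:ℝ) x ×ˢ Ioc (0:ℝ) y, f p := by
  have hsub := rect_subset_Q hx hy
  have hint : IntegrableOn f (Ioc (0:ℝ) x ×ˢ Ioc (0:ℝ) y) := hf.mono_set hsub
  rw [intervalIntegral.integral_of_le hx.1]
  have : ∀ s : ℝ, (∫ t in (0:ℝ)..y, f (s, t)) = ∫ t in Ioc (0:ℝ) y, f (s, t) :=
    fun s => intervalIntegral.integral_of_le hy.1
  simp_rw [this]
  exact (setIntegral_prod f hint).symm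

lemma bdd_of_weak {H : Type*} [NormedAddCommGroup H] [InnerProductSpace ℝ H]
    [CompleteSpace H] (F : ℕ → H)
    (h : ∀ g : H, Filter.Tendsto (fun k => (inner ℝ (F k) g : ℝ)) Filter.atTop (nhds 0)) :
    ∃ C : ℝ, ∀ k, ‖F k‖ ≤ C := by
  obtain ⟨C, hC⟩ := banach_steinhaus (g := fun k => innerSL ℝ (F k)) (fun g => by
    obtain ⟨C, hC⟩ := ((h g).norm).bddAbove_range
    exact ⟨C, fun k => hC ⟨k, rfl⟩⟩)
  exact ⟨C, fun k => by simpa [innerSL_apply_norm] using hC k⟩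

lemma cs_bound' {E : Type*} [NormedAddCommGroup E] [NormedSpace ℝ E] {f : ℝ × ℝ → E}
    (hf : MemLp f 2 (volume.restrict Q)) {S : Set (ℝ × ℝ)} (hS : MeasurableSet S)
    (hSQ : S ⊆ Q) :
    ‖∫ p in S, f p‖ ≤
      (eLpNorm f 2 (volume.restrict Q)).toReal * Real.sqrt ((volume S).toReal) := by
  rw [Real.sqrt_eq_rpow]
  exact cs_bound hf hS hSQ

lemma vol_rect {a b c d : ℝ} (hab : a ≤ b) (hcd : c ≤ d) :
    (volume (Ioc a b ×ˢ Ioc c d)).toReal = (b - a) * (d - c) := by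
  rw [show (volume : Measure (ℝ × ℝ)) = (volume : Measure ℝ).prod volume from rfl,
    Measure.prod_prod, Real.volume_Ioc, Real.volume_Ioc, ← ENNReal.ofReal_mul (by linarith),
    ENNReal.toReal_ofReal (by nlinarith)]

lemma W_diff_x {E : Type*} [NormedAddCommGroup E] [NormedSpace ℝ E] {f : ℝ × ℝ → E}
    (hf2 : MemLp f 2 (volume.restrict Q)) (hf : IntegrableOn f Q)
    {x x' y : ℝ} (hx : x ∈ Icc (0:ℝ) 1) (hx' : x' ∈ Icc (0:ℝ) 1) (hy : y ∈ Icc (0:ℝ) 1)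
    (hxx : x ≤ x') :
    ‖(∫ p in Ioc (0:ℝ) x' ×ˢ Ioc (0:ℝ) y, f p) - ∫ p in Ioc (0:ℝ) x ×ˢ Ioc (0:ℝ) y, f p‖
      ≤ (eLpNorm f 2 (volume.restrict Q)).toReal * Real.sqrt (x' - x) := by
  have hmid : Ioc x x' ×ˢ Ioc (0:ℝ) y ⊆ Q := by
    refine (prod_mono (Ioc_subset_Ioc hx.1 le_rfl) Subset.rfl).trans (rect_subset_Q hx' hy)
  have hsplit : (∫ p in Ioc (0:ℝ) x' ×ˢ Ioc (0:ℝ) y, f p)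
      = (∫ p in Ioc (0:ℝ) x ×ˢ Ioc (0:ℝ) y, f p) + ∫ p in Ioc x x' ×ˢ Ioc (0:ℝ) y, f p := by
    rw [← setIntegral_union]
    · rw [← union_prod, Ioc_union_Ioc_eq_Ioc hx.1 hxx]
    · exact Set.disjoint_prod.mpr (Or.inl (Set.Ioc_disjoint_Ioc_of_le le_rfl))
    · exact ((measurableSet_Ioc).prod measurableSet_Ioc)
    · exact hf.mono_set (rect_subset_Q hx hy)
    · exact hf.mono_set hmid
  rw [hsplit, add_sub_cancel_left]
  calc ‖∫ p in Ioc x x' ×ˢ Ioc (0:ℝ) y, f p‖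
      ≤ (eLpNorm f 2 (volume.restrict Q)).toReal *
        Real.sqrt ((volume (Ioc x x' ×ˢ Ioc (0:ℝ) y)).toReal) :=
        cs_bound' hf2 ((measurableSet_Ioc).prod measurableSet_Ioc) hmid
    _ ≤ (eLpNorm f 2 (volume.restrict Q)).toReal * Real.sqrt (x' - x) := by
        gcongr
        rw [vol_rect hxx hy.1]
        nlinarith [hy.2, hy.1]

lemma W_diff_y {E : Type*} [NormedAddCommGroup E] [NormedSpace ℝ E] {f : ℝ × ℝ → E}
    (hf2 : MemLp f 2 (volume.restrict Q)) (hf : IntegrableOn f Q)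
    {x y y' : ℝ} (hx : x ∈ Icc (0:ℝ) 1) (hy : y ∈ Icc (0:ℝ) 1) (hy' : y' ∈ Icc (0:ℝ) 1)
    (hyy : y ≤ y') :
    ‖(∫ p in Ioc (0:ℝ) x ×ˢ Ioc (0:ℝ) y', f p) - ∫ p in Ioc (0:ℝ) x ×ˢ Ioc (0:ℝ) y, f p‖
      ≤ (eLpNorm f 2 (volume.restrict Q)).toReal * Real.sqrt (y' - y) := by
  have hmid : Ioc (0:ℝ) x ×ˢ Ioc y y' ⊆ Q := by
    refine (prod_mono Subset.rfl (Ioc_subset_Ioc hy.1 le_rfl)).trans (rect_subset_Q hx hy')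
  have hsplit : (∫ p in Ioc (0:ℝ) x ×ˢ Ioc (0:ℝ) y', f p)
      = (∫ p in Ioc (0:ℝ) x ×ˢ Ioc (0:ℝ) y, f p) + ∫ p in Ioc (0:ℝ) x ×ˢ Ioc y y', f p := by
    rw [← setIntegral_union]
    · rw [← prod_union, Ioc_union_Ioc_eq_Ioc hy.1 hyy]
    · exact Set.disjoint_prod.mpr (Or.inr (Set.Ioc_disjoint_Ioc_of_le le_rfl))
    · exact ((measurableSet_Ioc).prod measurableSet_Ioc)
    · exact hf.mono_set (rect_subset_Q hx hy)
    · exact hf.mono_set hmid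
  rw [hsplit, add_sub_cancel_left]
  calc ‖∫ p in Ioc (0:ℝ) x ×ˢ Ioc y y', f p‖
      ≤ (eLpNorm f 2 (volume.restrict Q)).toReal *
        Real.sqrt ((volume (Ioc (0:ℝ) x ×ˢ Ioc y y')).toReal) :=
        cs_bound' hf2 ((measurableSet_Ioc).prod measurableSet_Ioc) hmid
    _ ≤ (eLpNorm f 2 (volume.restrict Q)).toReal * Real.sqrt (y' - y) := by
        gcongr
        rw [vol_rect hx.1 hyy]
        nlinarith [hx.2, hx.1]

set_option maxHeartbeats 1600000 in
/-- If `lᵏ ⇀ 0` weakly in `L²(Q,ℝⁿ)` and `zᵏ(x,y) = ∫₀ˣ∫₀ʸ lᵏ`, then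
`sup_{(x,y)∈Q} |zᵏ(x,y)| → 0` as `k → ∞`. -/
theorem weakly_null_implies_sup_tendsto_zero {n : ℕ}
    (l : ℕ → ℝ → ℝ → EuclideanSpace ℝ (Fin n))
    (hl : ∀ k, MemLp (fun p : ℝ × ℝ => l k p.1 p.2) 2 (volume.restrict Q))
    (hweak : ∀ g : ℝ → ℝ → EuclideanSpace ℝ (Fin n),
        MemLp (fun p : ℝ × ℝ => g p.1 p.2) 2 (volume.restrict Q) →
        Filter.Tendsto
          (fun k => ∫ p in Q, inner ℝ (l k p.1 p.2) (g p.1 p.2) ∂volume)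
          Filter.atTop (nhds (0:ℝ)))
    (z : ℕ → ℝ → ℝ → EuclideanSpace ℝ (Fin n))
    (hz : ∀ k x y, z k x y = ∫ s in (0:ℝ)..x, ∫ t in (0:ℝ)..y, l k s t) :
    Filter.Tendsto
      (fun k => ⨆ x : Icc (0:ℝ) 1, ⨆ y : Icc (0:ℝ) 1, ‖z k x y‖)
      Filter.atTop (nhds 0) := by
  classical
  -- integrability
  have hint : ∀ k, IntegrableOn (fun p : ℝ × ℝ => l k p.1 p.2) Q :=
    fun k => (hl k).integrable one_le_two
  -- the Lp elements
  set F : ℕ → Lp (EuclideanSpace ℝ (Fin n)) 2 (volume.restrict Q) := fun k => (hl k).toLp _ with hF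
  -- weak convergence in Lp
  have hFweak : ∀ g : Lp (EuclideanSpace ℝ (Fin n)) 2 (volume.restrict Q),
      Filter.Tendsto (fun k => (inner ℝ (F k) g : ℝ)) Filter.atTop (nhds 0) := by
    intro g
    have hg : MemLp (fun p : ℝ × ℝ => (g : ℝ × ℝ → EuclideanSpace ℝ (Fin n)) (p.1, p.2)) 2 (volume.restrict Q) := by
      simpa only [Prod.mk.eta] using Lp.memLp g
    have h := hweak (fun a b => (g : ℝ × ℝ → EuclideanSpace ℝ (Fin n)) (a, b)) hg
    refine h.congr (fun k => ?_)
    rw [L2.inner_def]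
    refine integral_congr_ae ?_
    filter_upwards [(hl k).coeFn_toLp] with p hp
    rw [hp]
  -- the uniform bound M
  obtain ⟨C, hC⟩ := bdd_of_weak F hFweak
  set M : ℝ := max C 0 with hMdef
  have hM0 : 0 ≤ M := le_max_right _ _
  have hM : ∀ k, (eLpNorm (fun p : ℝ × ℝ => l k p.1 p.2) 2 (volume.restrict Q)).toReal ≤ M := by
    intro k
    have := hC k
    rw [hF, Lp.norm_toLp] at this
    exact this.trans (le_max_left _ _)
  -- the rectangle integrals
  set W : ℕ → ℝ → ℝ → EuclideanSpace ℝ (Fin n) := fun k x y =>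
    ∫ p in Ioc (0:ℝ) x ×ˢ Ioc (0:ℝ) y, l k p.1 p.2 with hW
  have hzW : ∀ k, ∀ x ∈ Icc (0:ℝ) 1, ∀ y ∈ Icc (0:ℝ) 1, z k x y = W k x y := by
    intro k x hx y hy
    rw [hz]
    exact rep (f := fun p : ℝ × ℝ => l k p.1 p.2) (hint k) hx hy
  -- equicontinuity bounds
  have hWx : ∀ k, ∀ x ∈ Icc (0:ℝ) 1, ∀ x' ∈ Icc (0:ℝ) 1, ∀ y ∈ Icc (0:ℝ) 1, x ≤ x' →
      ‖W k x' y - W k x y‖ ≤ M * Real.sqrt (x' - x) := by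
    intro k x hx x' hx' y hy hxx
    refine (W_diff_x (hl k) (hint k) hx hx' hy hxx).trans ?_
    exact mul_le_mul_of_nonneg_right (hM k) (Real.sqrt_nonneg _)
  have hWy : ∀ k, ∀ x ∈ Icc (0:ℝ) 1, ∀ y ∈ Icc (0:ℝ) 1, ∀ y' ∈ Icc (0:ℝ) 1, y ≤ y' →
      ‖W k x y' - W k x y‖ ≤ M * Real.sqrt (y' - y) := by
    intro k x hx y hy y' hy' hyy
    refine (W_diff_y (hl k) (hint k) hx hy hy' hyy).trans ?_
    exact mul_le_mul_of_nonneg_right (hM k) (Real.sqrt_nonneg _)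
  -- pointwise convergence
  have hpt : ∀ x ∈ Icc (0:ℝ) 1, ∀ y ∈ Icc (0:ℝ) 1,
      Filter.Tendsto (fun k => ‖W k x y‖) Filter.atTop (nhds 0) := by
    intro x hx y hy
    set R : Set (ℝ × ℝ) := Ioc (0:ℝ) x ×ˢ Ioc (0:ℝ) y with hR
    have hRmeas : MeasurableSet R := (measurableSet_Ioc).prod measurableSet_Ioc
    have hRQ : R ⊆ Q := rect_subset_Q hx hy
    have hcoord : ∀ i : Fin n,
        Filter.Tendsto (fun k => W k x y i) Filter.atTop (nhds 0) := by
      intro i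
      set g : ℝ → ℝ → EuclideanSpace ℝ (Fin n) := fun a b =>
        R.indicator (fun _ => (EuclideanSpace.single i (1:ℝ) : EuclideanSpace ℝ (Fin n))) (a, b) with hg
      have hgmem : MemLp (fun p : ℝ × ℝ => g p.1 p.2) 2 (volume.restrict Q) := by
        have : (fun p : ℝ × ℝ => g p.1 p.2)
            = R.indicator (fun _ => (EuclideanSpace.single i (1:ℝ) : EuclideanSpace ℝ (Fin n))) := by
          funext p; simp [hg]
        rw [this]
        exact (memLp_const _).indicator hRmeas
      have h := hweak g hgmem
      refine h.congr (fun k => ?_)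
      have h1 : ∀ p : ℝ × ℝ, (inner ℝ (l k p.1 p.2) (g p.1 p.2) : ℝ)
          = R.indicator (fun p : ℝ × ℝ => (l k p.1 p.2) i) p := by
        intro p
        by_cases hp : p ∈ R
        · simp [hg, hp, EuclideanSpace.inner_single_right]
        · simp [hg, hp]
      calc (∫ p in Q, inner ℝ (l k p.1 p.2) (g p.1 p.2) ∂volume)
          = ∫ p in Q, R.indicator (fun p : ℝ × ℝ => (l k p.1 p.2) i) p ∂volume := by
            exact integral_congr_ae (Filter.Eventually.of_forall h1)
        _ = ∫ p in Q ∩ R, (l k p.1 p.2) i ∂volume := setIntegral_indicator hRmeas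
        _ = ∫ p in R, (l k p.1 p.2) i ∂volume := by
            rw [inter_eq_self_of_subset_right hRQ]
        _ = W k x y i := by
            have := (EuclideanSpace.proj i (𝕜 := ℝ)).integral_comp_comm
              ((hint k).mono_set hRQ)
            simpa using this
    have hsum : Filter.Tendsto (fun k => Real.sqrt (∑ i : Fin n, ‖W k x y i‖ ^ 2))
        Filter.atTop (nhds 0) := by
      have h2 : Filter.Tendsto (fun k => ∑ i : Fin n, ‖W k x y i‖ ^ 2)
          Filter.atTop (nhds 0) := by
        have := tendsto_finset_sum (Finset.univ : Finset (Fin n))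
          (fun i _ => (((hcoord i).norm).mul ((hcoord i).norm)))
        simpa [pow_two] using this
      have h3 := (Real.continuous_sqrt.tendsto 0).comp h2
      simpa [Function.comp_def] using h3
    refine hsum.congr (fun k => ?_)
    rw [EuclideanSpace.norm_eq]
  -- global bound (for BddAbove-type uses; not strictly needed but cheap)
  -- main ε-argument
  rw [Metric.tendsto_atTop]
  intro ε hε
  set c : ℝ := ε / (4 * (M + 1)) with hcdef
  have hc : 0 < c := by positivity
  obtain ⟨m0, hm0⟩ := exists_nat_one_div_lt (show (0:ℝ) < c ^ 2 by positivity)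
  set m : ℕ := m0 + 1 with hmdef
  have hmpos : (0:ℝ) < m := by positivity
  have hminv : 1 / (m:ℝ) < c ^ 2 := by
    rw [hmdef]; push_cast; exact hm0
  have hgridmem : ∀ i : ℕ, i ≤ m → ((i:ℝ)/m) ∈ Icc (0:ℝ) 1 := by
    intro i hi
    constructor
    · positivity
    · rw [div_le_one hmpos]; exact_mod_cast hi
  have hev : ∀ᶠ k in Filter.atTop, ∀ i ∈ Finset.range (m+1), ∀ j ∈ Finset.range (m+1),
      ‖W k ((i:ℝ)/m) ((j:ℝ)/m)‖ < ε/4 := by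
    rw [Filter.eventually_all_finset]
    intro i hi
    rw [Filter.eventually_all_finset]
    intro j hj
    have hi' : i ≤ m := Nat.lt_succ_iff.mp (Finset.mem_range.mp hi)
    have hj' : j ≤ m := Nat.lt_succ_iff.mp (Finset.mem_range.mp hj)
    exact (hpt _ (hgridmem i hi') _ (hgridmem j hj')).eventually_lt_const (by positivity)
  obtain ⟨K, hK⟩ := Filter.eventually_atTop.mp hev
  refine ⟨K, fun k hk => ?_⟩
  have hMc : M * c ≤ ε / 4 := by
    have he : M * c = M * ε / (4 * (M + 1)) := by rw [hcdef]; ring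
    rw [he, div_le_iff₀ (by positivity)]
    nlinarith [hε.le]
  -- bound each value
  have hkey : ∀ x ∈ Icc (0:ℝ) 1, ∀ y ∈ Icc (0:ℝ) 1, ‖z k x y‖ ≤ 3 * ε / 4 := by
    intro x hx y hy
    set i : ℕ := ⌊x * m⌋₊ with hidef
    set j : ℕ := ⌊y * m⌋₊ with hjdef
    have hxm0 : 0 ≤ x * m := by nlinarith [hx.1]
    have hym0 : 0 ≤ y * m := by nlinarith [hy.1]
    have him : i ≤ m := by
      rw [hidef]
      calc ⌊x * (m:ℝ)⌋₊ ≤ ⌊((m:ℕ):ℝ)⌋₊ := Nat.floor_mono (by nlinarith [hx.2])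
        _ = m := Nat.floor_natCast m
    have hjm : j ≤ m := by
      rw [hjdef]
      calc ⌊y * (m:ℝ)⌋₊ ≤ ⌊((m:ℕ):ℝ)⌋₊ := Nat.floor_mono (by nlinarith [hy.2])
        _ = m := Nat.floor_natCast m
    have hile : (i:ℝ)/m ≤ x := by
      rw [div_le_iff₀ hmpos]
      exact Nat.floor_le hxm0
    have hjle : (j:ℝ)/m ≤ y := by
      rw [div_le_iff₀ hmpos]
      exact Nat.floor_le hym0
    have hflx : x * (m:ℝ) < (i:ℝ) + 1 := by
      rw [hidef]; exact_mod_cast Nat.lt_floor_add_one (x * (m:ℝ))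
    have hfly : y * (m:ℝ) < (j:ℝ) + 1 := by
      rw [hjdef]; exact_mod_cast Nat.lt_floor_add_one (y * (m:ℝ))
    have hxi : x - (i:ℝ)/m ≤ 1/m := by
      rw [sub_le_iff_le_add, ← add_div, le_div_iff₀ hmpos]
      linarith
    have hyj : y - (j:ℝ)/m ≤ 1/m := by
      rw [sub_le_iff_le_add, ← add_div, le_div_iff₀ hmpos]
      linarith
    have hic : Real.sqrt (x - (i:ℝ)/m) ≤ c := by
      refine (Real.sqrt_le_sqrt (hxi.trans hminv.le)).trans ?_
      rw [Real.sqrt_sq hc.le]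
    have hjc : Real.sqrt (y - (j:ℝ)/m) ≤ c := by
      refine (Real.sqrt_le_sqrt (hyj.trans hminv.le)).trans ?_
      rw [Real.sqrt_sq hc.le]
    have hQi := hgridmem i him
    have hQj := hgridmem j hjm
    have hT1 : ‖W k x y - W k ((i:ℝ)/m) y‖ ≤ M * c := by
      refine (hWx k _ hQi _ hx _ hy hile).trans ?_
      exact mul_le_mul_of_nonneg_left hic hM0
    have hT2 : ‖W k ((i:ℝ)/m) y - W k ((i:ℝ)/m) ((j:ℝ)/m)‖ ≤ M * c := by
      refine (hWy k _ hQi _ hQj _ hy hjle).trans ?_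
      exact mul_le_mul_of_nonneg_left hjc hM0
    have hT3 : ‖W k ((i:ℝ)/m) ((j:ℝ)/m)‖ < ε/4 :=
      hK k hk i (Finset.mem_range.mpr (Nat.lt_succ_of_le him))
        j (Finset.mem_range.mpr (Nat.lt_succ_of_le hjm))
    have htri : ‖W k x y‖ ≤ ‖W k x y - W k ((i:ℝ)/m) y‖
        + ‖W k ((i:ℝ)/m) y - W k ((i:ℝ)/m) ((j:ℝ)/m)‖ + ‖W k ((i:ℝ)/m) ((j:ℝ)/m)‖ := by
      have e1 : W k x y = (W k x y - W k ((i:ℝ)/m) y)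
          + (W k ((i:ℝ)/m) y - W k ((i:ℝ)/m) ((j:ℝ)/m)) + W k ((i:ℝ)/m) ((j:ℝ)/m) := by
        abel
      calc ‖W k x y‖ = ‖(W k x y - W k ((i:ℝ)/m) y)
          + (W k ((i:ℝ)/m) y - W k ((i:ℝ)/m) ((j:ℝ)/m)) + W k ((i:ℝ)/m) ((j:ℝ)/m)‖ := by
            rw [← e1]
        _ ≤ _ := by
            refine (norm_add_le _ _).trans ?_
            gcongr
            exact norm_add_le _ _
    rw [hzW k x hx y hy]
    linarith [htri, hT1, hT2, hT3]
  -- conclude for the sup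
  haveI : Nonempty (Icc (0:ℝ) 1) := ⟨⟨0, by norm_num, by norm_num⟩⟩
  have hsup_le : (⨆ x : Icc (0:ℝ) 1, ⨆ y : Icc (0:ℝ) 1, ‖z k x y‖) ≤ 3 * ε / 4 := by
    refine ciSup_le (fun x => ciSup_le (fun y => ?_))
    exact hkey x.1 x.2 y.1 y.2
  have hsup_nonneg : 0 ≤ ⨆ x : Icc (0:ℝ) 1, ⨆ y : Icc (0:ℝ) 1, ‖z k x y‖ :=
    Real.iSup_nonneg (fun x => Real.iSup_nonneg (fun y => norm_nonneg _))
  rw [Real.dist_eq, sub_zero, abs_of_nonneg hsup_nonneg]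
  linarith
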